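/- For all x with |x| < 1: √((√(1+x) − 1)/x) = (1/√2) Σ_{k≥0} (1/4)_k (3/4)_k / ((3/2)_k k!) (−x)^k, the left side extended continuously at 0 to 1/√2. -/

import Mathlib

open Real Polynomial

noncomputable def bc : ℕ → ℝ
  | 0 => 1
  | n + 1 => bc n * (1 / 2 - n) / (n + 1)

lemma bc_zero : bc 0 = 1 := rfl

lemma bc_succ (n : ℕ) : bc (n + 1) = bc n * (1 / 2 - n) / (n + 1) := rfl

lemma bc_rec (n : ℕ) : ((n : ℝ) + 1) * bc (n + 1) = (1 / 2 - n) * bc n := by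
  rw [bc_succ]
  have h : ((n : ℝ) + 1) ≠ 0 := by positivity
  field_simp

lemma abs_bc_le (n : ℕ) : |bc n| ≤ 1 := by
  induction n with
  | zero => simp [bc_zero]
  | succ n ih =>
    rw [bc_succ, abs_div, abs_mul]
    have hn : (0:ℝ) ≤ (n:ℝ) := Nat.cast_nonneg n
    have h1 : |(1 / 2 - (n : ℝ))| ≤ (n : ℝ) + 1 := by
      rw [abs_le]; constructor <;> nlinarith
    have h2 : |((n : ℝ) + 1)| = (n : ℝ) + 1 := abs_of_pos (by positivity)
    rw [h2, div_le_one (by positivity)]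
    calc |bc n| * |1 / 2 - (n : ℝ)| ≤ 1 * ((n : ℝ) + 1) :=
          mul_le_mul ih h1 (abs_nonneg _) one_pos.le
      _ = (n : ℝ) + 1 := one_mul _

lemma summable_bc {y : ℝ} (hy : |y| < 1) : Summable (fun n => bc n * y ^ n) := by
  apply Summable.of_norm_bounded (summable_geometric_of_lt_one (abs_nonneg y) hy)
  intro n
  rw [Real.norm_eq_abs, abs_mul, abs_pow]
  calc |bc n| * |y| ^ n ≤ 1 * |y| ^ n :=
        mul_le_mul_of_nonneg_right (abs_bc_le n) (by positivity)
    _ = |y| ^ n := one_mul _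

lemma summable_aux {r : ℝ} (hr0 : 0 ≤ r) (hr : r < 1) :
    Summable (fun n : ℕ => (n : ℝ) * r ^ (n - 1)) := by
  rw [← summable_nat_add_iff 1]
  have h1 : Summable (fun n : ℕ => ((n : ℝ) + 1) * r ^ n) := by
    have h2 := summable_pow_mul_geometric_of_norm_lt_one (R := ℝ) 1
      (r := r) (by rwa [Real.norm_eq_abs, abs_of_nonneg hr0])
    have h3 := summable_geometric_of_lt_one hr0 hr
    simpa [pow_one, add_mul] using h2.add h3
  convert h1 using 2 with n
  · rfl
  push_cast
  simp

lemma summable_bc_deriv {y r : ℝ} (hyr : |y| ≤ r) (hr : r < 1) :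
    Summable (fun n : ℕ => bc n * ((n : ℝ) * y ^ (n - 1))) := by
  apply Summable.of_norm_bounded (summable_aux ((abs_nonneg y).trans hyr) hr)
  intro n
  rw [Real.norm_eq_abs, abs_mul, abs_mul, abs_pow]
  have h1 : |(n:ℝ)| = (n:ℝ) := abs_of_nonneg (Nat.cast_nonneg n)
  rw [h1]
  calc |bc n| * ((n:ℝ) * |y| ^ (n-1)) ≤ 1 * ((n:ℝ) * r ^ (n-1)) := by
        apply mul_le_mul (abs_bc_le n) _ (by positivity) one_pos.le
        exact mul_le_mul_of_nonneg_left (pow_le_pow_left₀ (abs_nonneg y) hyr _) (Nat.cast_nonneg n)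
    _ = (n:ℝ) * r ^ (n-1) := one_mul _

noncomputable def gb (y : ℝ) : ℝ := ∑' n : ℕ, bc n * y ^ n

lemma hasDerivAt_gb {y : ℝ} (hy : |y| < 1) :
    HasDerivAt gb (∑' n : ℕ, bc n * ((n : ℝ) * y ^ (n - 1))) y := by
  set r : ℝ := (1 + |y|) / 2 with hr
  have hr1 : r < 1 := by rw [hr]; linarith
  have hyr : |y| < r := by rw [hr]; linarith [abs_nonneg y]
  have hr0 : 0 ≤ r := le_of_lt (lt_of_le_of_lt (abs_nonneg y) hyr)
  apply hasDerivAt_tsum_of_isPreconnected (u := fun n : ℕ => (n:ℝ) * r ^ (n-1))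
    (summable_aux hr0 hr1) isOpen_Ioo (isPreconnected_Ioo) (t := Set.Ioo (-r) r)
    (g' := fun n z => bc n * ((n : ℝ) * z ^ (n - 1))) (y₀ := 0)
  · intro n z _
    exact (hasDerivAt_pow n z).const_mul (bc n)
  · intro n z hz
    have hz' : |z| ≤ r := le_of_lt (abs_lt.mpr ⟨hz.1, hz.2⟩)
    rw [Real.norm_eq_abs, abs_mul, abs_mul, abs_pow, abs_of_nonneg (Nat.cast_nonneg (α := ℝ) n)]
    calc |bc n| * ((n:ℝ) * |z| ^ (n-1)) ≤ 1 * ((n:ℝ) * r ^ (n-1)) := by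
          apply mul_le_mul (abs_bc_le n) _ (by positivity) one_pos.le
          exact mul_le_mul_of_nonneg_left (pow_le_pow_left₀ (abs_nonneg z) hz' _) (Nat.cast_nonneg n)
      _ = (n:ℝ) * r ^ (n-1) := one_mul _
  · have hrpos : 0 < r := by rw [hr]; positivity
    exact Set.mem_Ioo.mpr ⟨by linarith, hrpos⟩
  · exact summable_bc (by rw [abs_zero]; linarith)
  · exact Set.mem_Ioo.mpr ⟨(abs_lt.mp hyr).1, (abs_lt.mp hyr).2⟩

lemma gb_ode {y : ℝ} (hy : |y| < 1) :
    HasDerivAt gb (gb y / (2 * (1 + y))) y := by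
  have hS : Summable (fun n : ℕ => bc n * ((n : ℝ) * y ^ (n - 1))) :=
    summable_bc_deriv (le_refl _) hy
  set T := ∑' n : ℕ, bc n * ((n : ℝ) * y ^ (n - 1)) with hTdef
  have h1y : 0 < 1 + y := by have := abs_lt.mp hy; linarith [this.1]
  have hyT : y * T = ∑' n : ℕ, (n : ℝ) * bc n * y ^ n := by
    rw [hTdef, ← tsum_mul_left]
    apply tsum_congr; intro n
    cases n with
    | zero => simp
    | succ m => rw [Nat.add_sub_cancel, pow_succ]; push_cast; ring
  have hT : T = ∑' n : ℕ, bc (n + 1) * (((n : ℝ) + 1) * y ^ n) := by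
    rw [hTdef, hS.tsum_eq_zero_add]
    simp only [Nat.cast_zero, zero_mul, mul_zero, zero_add, Nat.add_sub_cancel]
    push_cast; rfl
  have h1 : Summable (fun n : ℕ => bc (n + 1) * (((n : ℝ) + 1) * y ^ n)) := by
    have h := (summable_nat_add_iff 1).mpr hS
    convert h using 2 with n
    · rfl
    rw [Nat.add_sub_cancel]; push_cast
    ring
  have h2 : Summable (fun n : ℕ => (n : ℝ) * bc n * y ^ n) := by
    apply Summable.of_norm_bounded
      (summable_pow_mul_geometric_of_norm_lt_one 1 (r := |y|) (by rwa [Real.norm_eq_abs, abs_abs]))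
    intro n
    rw [Real.norm_eq_abs, abs_mul, abs_mul, abs_pow, abs_of_nonneg (Nat.cast_nonneg (α := ℝ) n)]
    have : |bc n| ≤ 1 := abs_bc_le n
    have h0 : (0:ℝ) ≤ |y| ^ n := by positivity
    have := mul_le_mul_of_nonneg_right (mul_le_mul_of_nonneg_left this (Nat.cast_nonneg (α := ℝ) n)) h0
    simpa [pow_one] using this
  have key : (1 + y) * T = 1 / 2 * gb y := by
    calc (1 + y) * T = T + y * T := by ring
      _ = (∑' n : ℕ, bc (n + 1) * (((n : ℝ) + 1) * y ^ n)) + ∑' n : ℕ, (n : ℝ) * bc n * y ^ n := by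
          rw [← hT, ← hyT]
      _ = ∑' n : ℕ, (bc (n + 1) * (((n : ℝ) + 1) * y ^ n) + (n : ℝ) * bc n * y ^ n) :=
          (h1.tsum_add h2).symm
      _ = ∑' n : ℕ, 1 / 2 * (bc n * y ^ n) := by
          apply tsum_congr; intro n
          linear_combination y ^ n * bc_rec n
      _ = 1 / 2 * gb y := by rw [tsum_mul_left]; rfl
  have : gb y / (2 * (1 + y)) = T := by
    rw [div_eq_iff (by positivity)]
    linear_combination -2 * key
  rw [this]; exact hasDerivAt_gb hy

lemma abs_lt_one_of_mem {x z : ℝ} (hx : |x| < 1) (hz : z ∈ Set.uIcc x 0) : |z| < 1 := by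
  have h := abs_lt.mp hx
  rcases Set.mem_uIcc.mp hz with ⟨h1, h2⟩ | ⟨h1, h2⟩ <;> rw [abs_lt] <;>
    constructor <;> linarith

lemma gb_zero : gb 0 = 1 := by
  rw [gb, tsum_eq_single 0 (fun n hn => by simp [zero_pow hn])]
  simp [bc_zero]

lemma gb_sq {x : ℝ} (hx : |x| < 1) : ∀ z ∈ Set.uIcc x 0, gb z ^ 2 = 1 + z := by
  set φ : ℝ → ℝ := fun z => gb z ^ 2 / (1 + z) with hφ
  have hderiv : ∀ z : ℝ, |z| < 1 → HasDerivAt φ 0 z := by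
    intro z hz
    have h1z : 0 < 1 + z := by have := abs_lt.mp hz; linarith [this.1]
    have hg := gb_ode hz
    have hpow := hg.pow 2
    have hden : HasDerivAt (fun z : ℝ => 1 + z) 1 z := by
      simpa using (hasDerivAt_id z).const_add 1
    have hdiv := hpow.div hden (ne_of_gt h1z)
    convert hdiv using 1
    · rfl
    · rfl
    · rfl
    field_simp
    rw [Pi.pow_apply]; ring
  have hI : Set.uIcc x 0 = Set.Icc (x ⊓ 0) (x ⊔ 0) := rfl
  have hmem : ∀ z ∈ Set.Icc (x ⊓ 0) (x ⊔ 0), |z| < 1 := by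
    intro z hz; exact abs_lt_one_of_mem hx (by rw [hI]; exact hz)
  have hconst := constant_of_has_deriv_right_zero (f := φ) (a := x ⊓ 0) (b := x ⊔ 0)
    (fun z hz => (hderiv z (hmem z hz)).continuousAt.continuousWithinAt)
    (fun z hz => (hderiv z (hmem z (Set.mem_Icc_of_Ico hz))).hasDerivWithinAt)
  intro z hz
  have hz' := hz; rw [hI] at hz'
  have h0 : (0:ℝ) ∈ Set.Icc (x ⊓ 0) (x ⊔ 0) := by rw [← hI]; exact Set.right_mem_uIcc
  have e1 : φ z = φ (x ⊓ 0) := hconst z hz'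
  have e2 : φ 0 = φ (x ⊓ 0) := hconst 0 h0
  have e3 : φ z = φ 0 := e1.trans e2.symm
  have hφ0 : φ 0 = 1 := by rw [hφ]; simp [gb_zero]
  have h1z : 0 < 1 + z := by have := abs_lt.mp (abs_lt_one_of_mem hx hz); linarith [this.1]
  have h4 : gb z ^ 2 / (1 + z) = 1 := by simpa [hφ] using e3.trans hφ0
  field_simp at h4
  linarith [h4]

lemma gb_eq_sqrt {x : ℝ} (hx : |x| < 1) : gb x = Real.sqrt (1 + x) := by
  have hsq := gb_sq hx x Set.left_mem_uIcc
  have h1x : 0 < 1 + x := by have := abs_lt.mp hx; linarith [this.1]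
  have hpos : 0 < gb x := by
    rcases lt_trichotomy (gb x) 0 with hneg | hzero | hpos
    · exfalso
      have hcont : ContinuousOn gb (Set.uIcc x 0) := fun z hz =>
        (gb_ode (abs_lt_one_of_mem hx hz)).continuousAt.continuousWithinAt
      have hmem0 : (0:ℝ) ∈ Set.uIcc (gb x) (gb 0) := by
        rw [gb_zero]
        exact Set.mem_uIcc.mpr (Or.inl ⟨hneg.le, by norm_num⟩)
      obtain ⟨c, hc, hc0⟩ := intermediate_value_uIcc hcont hmem0
      have hcsq := gb_sq hx c hc
      have h1c : 0 < 1 + c := by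
        have := abs_lt.mp (abs_lt_one_of_mem hx hc); linarith [this.1]
      rw [hc0] at hcsq
      nlinarith
    · exfalso; rw [hzero] at hsq; nlinarith
    · exact hpos
  rw [← hsq, Real.sqrt_sq hpos.le]

lemma hasSum_gb {y : ℝ} (hy : |y| < 1) :
    HasSum (fun n : ℕ => bc n * y ^ n) (Real.sqrt (1 + y)) := by
  rw [← gb_eq_sqrt hy]
  exact (summable_bc hy).hasSum

noncomputable def cc (k : ℕ) : ℝ :=
  (ascPochhammer ℝ k).eval (1 / 4) * (ascPochhammer ℝ k).eval (3 / 4) /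
    ((ascPochhammer ℝ k).eval (3 / 2) * (k.factorial : ℝ))

lemma ascPochhammer_eval_pos {b : ℝ} (hb : 0 < b) (k : ℕ) :
    0 < (ascPochhammer ℝ k).eval b := by
  induction k with
  | zero => simp [ascPochhammer_zero]
  | succ n ih =>
    rw [ascPochhammer_succ_eval]
    have : (0:ℝ) < b + n := by positivity
    exact mul_pos ih this

lemma cc_eq (k : ℕ) : cc k = 2 * bc (2 * k + 1) := by
  induction k with
  | zero =>
    show cc 0 = 2 * bc (0 + 1)
    rw [bc_succ, bc_zero, cc]
    simp [ascPochhammer_zero]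
  | succ n ih =>
    have hbc : bc (2 * n + 1) = cc n / 2 := by rw [ih]; ring
    have e1 : 2 * (n + 1) + 1 = (2 * n + 1) + 1 + 1 := by ring
    rw [e1, bc_succ, bc_succ, hbc]
    rw [cc, cc, ascPochhammer_succ_eval, ascPochhammer_succ_eval, ascPochhammer_succ_eval,
      Nat.factorial_succ]
    have hC : (0:ℝ) < (ascPochhammer ℝ n).eval (3 / 2) := ascPochhammer_eval_pos (by norm_num) n
    have hF : ((n.factorial : ℝ)) ≠ 0 := Nat.cast_ne_zero.mpr n.factorial_ne_zero
    have h1 : (0:ℝ) < (3:ℝ)/2 + n := by positivity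
    have h2 : ((2*n+1 : ℕ) : ℝ) + 1 ≠ 0 := by push_cast; positivity
    have h3 : ((2*n+1+1 : ℕ) : ℝ) + 1 ≠ 0 := by push_cast; positivity
    push_cast
    field_simp
    ring

lemma main_neg {x : ℝ} (hx1 : -1 < x) (hx0 : x < 0) :
    Real.sqrt ((Real.sqrt (1 + x) - 1) / x) =
      1 / Real.sqrt 2 * ∑' k : ℕ, cc k * (-x) ^ k := by
  set t := Real.sqrt (-x) with htdef
  have hxpos : 0 < -x := by linarith
  have ht0 : 0 < t := Real.sqrt_pos.mpr hxpos
  have ht2 : t ^ 2 = -x := Real.sq_sqrt hxpos.le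
  have ht1 : t < 1 := by
    rw [htdef, show (1:ℝ) = Real.sqrt 1 by simp]
    exact Real.sqrt_lt_sqrt hxpos.le (by linarith)
  have habs_t : |t| < 1 := by rw [abs_of_pos ht0]; exact ht1
  have habs_nt : |(-t)| < 1 := by rw [abs_neg, abs_of_pos ht0]; exact ht1
  have hp := hasSum_gb habs_t
  have hm := hasSum_gb habs_nt
  rw [show 1 + -t = 1 - t by ring] at hm
  have hdiff := hp.sub hm
  have hodd : HasSum (fun k : ℕ => 2 * bc (2 * k + 1) * t ^ (2 * k + 1))
      (Real.sqrt (1 + t) - Real.sqrt (1 - t)) := by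
    have hinj : Function.Injective (fun k : ℕ => 2 * k + 1) := fun a b h => by simp only at h; omega
    have hsupp : ∀ m ∉ Set.range (fun k : ℕ => 2 * k + 1),
        bc m * t ^ m - bc m * (-t) ^ m = 0 := by
      intro m hm'
      have hev : Even m := by
        rcases Nat.even_or_odd m with h | h
        · exact h
        · obtain ⟨k, hk⟩ := h
          exact absurd ⟨k, by simp only; omega⟩ hm'
      rw [hev.neg_pow]; ring
    have h2 := (Function.Injective.hasSum_iff hinj hsupp).mpr hdiff
    convert h2 using 1
    funext k
    have hoddk : Odd (2 * k + 1) := ⟨k, by ring⟩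
    simp only [Function.comp_apply, hoddk.neg_pow]
    ring
  have hser : HasSum (fun k : ℕ => cc k * (-x) ^ k)
      ((Real.sqrt (1 + t) - Real.sqrt (1 - t)) / t) := by
    have h3 := hodd.div_const t
    convert h3 using 1
    · rfl
    funext k
    rw [cc_eq, ← ht2, ← pow_mul, pow_succ]
    field_simp
  set A := Real.sqrt (1 + t) with hAdef
  set B := Real.sqrt (1 - t) with hBdef
  have hA2 : A ^ 2 = 1 + t := Real.sq_sqrt (by linarith)
  have hB2 : B ^ 2 = 1 - t := Real.sq_sqrt (by linarith)
  have hB0 : 0 ≤ B := Real.sqrt_nonneg _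
  have hAB : A * B = Real.sqrt (1 + x) := by
    rw [hAdef, hBdef, ← Real.sqrt_mul (by linarith : (0:ℝ) ≤ 1 + t)]
    congr 1
    nlinarith [ht2]
  have hBA : B ≤ A := Real.sqrt_le_sqrt (by linarith)
  have hABle : A * B ≤ 1 := by rw [hAB]; exact Real.sqrt_le_one.mpr (by linarith)
  have key : Real.sqrt 2 * Real.sqrt (1 - A * B) = A - B := by
    rw [← Real.sqrt_mul (by norm_num),
      show 2 * (1 - A * B) = (A - B) ^ 2 by nlinarith [hA2, hB2]]
    exact Real.sqrt_sq (by linarith)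
  have lhs_eq : Real.sqrt ((Real.sqrt (1 + x) - 1) / x) = Real.sqrt (1 - A * B) / t := by
    have harg : (Real.sqrt (1 + x) - 1) / x = (1 - A * B) / t ^ 2 := by
      rw [← hAB, ht2]
      have hx0' : x ≠ 0 := ne_of_lt hx0
      field_simp
      ring
    rw [harg, Real.sqrt_div (by linarith : (0:ℝ) ≤ 1 - A * B),
      Real.sqrt_sq ht0.le]
  rw [lhs_eq, hser.tsum_eq, ← key]
  have h2 : Real.sqrt 2 ≠ 0 := by positivity
  field_simp

lemma analyticAt_sqrt {a : ℝ} (ha : 0 < a) : AnalyticAt ℝ Real.sqrt a := by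
  have h1 : AnalyticAt ℂ (fun z : ℂ => z ^ (1 / 2 : ℂ)) (a : ℂ) := by
    apply AnalyticAt.cpow analyticAt_id analyticAt_const
    rw [Complex.mem_slitPlane_iff]
    simp [ha]
  have h2 : AnalyticAt ℝ (fun z : ℂ => z ^ (1 / 2 : ℂ)) (a : ℂ) := h1.restrictScalars
  have h3 : AnalyticAt ℝ (fun x : ℝ => ((x : ℂ) ^ (1 / 2 : ℂ))) a :=
    h2.comp (Complex.ofRealCLM.analyticAt a)
  have h4 : AnalyticAt ℝ (fun x : ℝ => ((x : ℂ) ^ (1 / 2 : ℂ)).re) a :=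
    (Complex.reCLM.analyticAt _).comp h3
  apply h4.congr
  have hmem : Set.Ioi (0:ℝ) ∈ nhds a := isOpen_Ioi.mem_nhds ha
  filter_upwards [hmem] with y hy
  have hy0 : (0:ℝ) ≤ y := le_of_lt hy
  rw [show (1/2 : ℂ) = ((1/2 : ℝ) : ℂ) by norm_num, ← Complex.ofReal_cpow hy0,
    Complex.ofReal_re, Real.sqrt_eq_rpow]

noncomputable def Fb (x : ℝ) : ℝ := 1 / Real.sqrt (1 + Real.sqrt (1 + x))

lemma analyticOn_Fb : AnalyticOnNhd ℝ Fb (Set.Ioo (-1 : ℝ) 1) := by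
  intro x hx
  obtain ⟨hx1, hx2⟩ := hx
  have h1x : 0 < 1 + x := by linarith
  have hadd1 : AnalyticAt ℝ (fun y : ℝ => 1 + y) x := analyticAt_const.add analyticAt_id
  have hs1 : AnalyticAt ℝ (fun y : ℝ => Real.sqrt (1 + y)) x :=
    AnalyticAt.comp (f := fun y : ℝ => 1 + y) (analyticAt_sqrt h1x) hadd1
  have h2 : 0 < 1 + Real.sqrt (1 + x) := by positivity
  have hadd2 : AnalyticAt ℝ (fun y : ℝ => 1 + Real.sqrt (1 + y)) x := analyticAt_const.add hs1
  have hs2 : AnalyticAt ℝ (fun y : ℝ => Real.sqrt (1 + Real.sqrt (1 + y))) x :=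
    AnalyticAt.comp (f := fun y : ℝ => 1 + Real.sqrt (1 + y)) (analyticAt_sqrt h2) hadd2
  have h3 : Real.sqrt (1 + Real.sqrt (1 + x)) ≠ 0 := by positivity
  exact analyticAt_const.div hs2 h3

noncomputable def Gb (x : ℝ) : ℝ := ∑' k : ℕ, cc k * (-x) ^ k

lemma Gb_eq_sum (x : ℝ) :
    Gb x = (ordinaryHypergeometricSeries ℝ (1/4 : ℝ) (3/4) (3/2)).sum (-x) := by
  rw [Gb, ordinaryHypergeometric_sum_eq]
  apply tsum_congr
  intro k
  rw [smul_eq_mul, cc]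
  ring

lemma analyticOn_Gb : AnalyticOnNhd ℝ Gb (Set.Ioo (-1 : ℝ) 1) := by
  have habc : ∀ kn : ℕ, (kn : ℝ) ≠ -(1/4 : ℝ) ∧ (kn : ℝ) ≠ -(3/4 : ℝ) ∧
      (kn : ℝ) ≠ -(3/2 : ℝ) := by
    intro kn
    have h := Nat.cast_nonneg (α := ℝ) kn
    refine ⟨?_, ?_, ?_⟩ <;> intro hc <;> rw [hc] at h <;> norm_num at h
  have hrad : (ordinaryHypergeometricSeries ℝ (1/4 : ℝ) (3/4) (3/2)).radius = 1 :=
    ordinaryHypergeometricSeries_radius_eq_one ℝ _ _ _ habc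
  have hball := (ordinaryHypergeometricSeries ℝ (1/4 : ℝ) (3/4) (3/2)).hasFPowerSeriesOnBall
    (by rw [hrad]; norm_num)
  intro x hx
  obtain ⟨hx1, hx2⟩ := hx
  have hmem : -x ∈ Metric.eball (0 : ℝ) (ordinaryHypergeometricSeries ℝ (1/4:ℝ) (3/4) (3/2)).radius := by
    have hn : ‖-x‖ < 1 := by
      rw [norm_neg, Real.norm_eq_abs, abs_lt]; exact ⟨hx1, hx2⟩
    rw [hrad, mem_eball_zero_iff, enorm_eq_nnnorm]
    exact_mod_cast hn
  have hsum : AnalyticAt ℝ (ordinaryHypergeometricSeries ℝ (1/4:ℝ) (3/4) (3/2)).sum (-x) :=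
    hball.analyticAt_of_mem hmem
  have hneg : AnalyticAt ℝ (fun y : ℝ => -y) x := analyticAt_id.neg
  have hcomp := hsum.comp hneg
  exact hcomp.congr (Filter.Eventually.of_forall fun y => (Gb_eq_sum y).symm)

lemma lhs_eq_Fb {x : ℝ} (hx1 : -1 < x) (hx2 : x < 1) (hx0 : x ≠ 0) :
    Real.sqrt ((Real.sqrt (1 + x) - 1) / x) = Fb x := by
  have h1x : 0 < 1 + x := by linarith
  have hs : (0:ℝ) ≤ Real.sqrt (1 + x) := Real.sqrt_nonneg _
  have hs2 : Real.sqrt (1 + x) ^ 2 = 1 + x := Real.sq_sqrt h1x.le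
  have hden : 0 < 1 + Real.sqrt (1 + x) := by linarith
  have harg : (Real.sqrt (1 + x) - 1) / x = 1 / (1 + Real.sqrt (1 + x)) := by
    rw [div_eq_div_iff hx0 (ne_of_gt hden)]
    linear_combination hs2
  rw [harg, Fb, Real.sqrt_div (by norm_num : (0:ℝ) ≤ 1), Real.sqrt_one]

lemma eqOn_Fb_Gb :
    Set.EqOn Fb (fun x => 1 / Real.sqrt 2 * Gb x) (Set.Ioo (-1 : ℝ) 1) := by
  have hG : AnalyticOnNhd ℝ (fun x => 1 / Real.sqrt 2 * Gb x) (Set.Ioo (-1 : ℝ) 1) :=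
    fun x hx => analyticAt_const.mul (analyticOn_Gb x hx)
  apply analyticOn_Fb.eqOn_of_preconnected_of_eventuallyEq hG isPreconnected_Ioo
    (show (-(1/2) : ℝ) ∈ Set.Ioo (-1 : ℝ) 1 by norm_num)
  have hmem : Set.Ioo (-1 : ℝ) 0 ∈ nhds (-(1/2) : ℝ) :=
    isOpen_Ioo.mem_nhds (by norm_num)
  filter_upwards [hmem] with y hy
  have hy2 : y < 1 := by linarith [hy.2]
  rw [← lhs_eq_Fb hy.1 hy2 (ne_of_lt hy.2)]
  exact main_neg hy.1 hy.2

theorem stmt_17 (x : ℝ) (hx : |x| < 1) :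
    (if x = 0 then 1 / Real.sqrt 2 else Real.sqrt ((Real.sqrt (1 + x) - 1) / x)) =
      1 / Real.sqrt 2 *
        ∑' k : ℕ, (ascPochhammer ℝ k).eval (1 / 4) * (ascPochhammer ℝ k).eval (3 / 4) /
          ((ascPochhammer ℝ k).eval (3 / 2) * (k.factorial : ℝ)) * (-x) ^ k := by
  have hx1 : -1 < x := (abs_lt.mp hx).1
  have hx2 : x < 1 := (abs_lt.mp hx).2
  by_cases h0 : x = 0
  · subst h0
    rw [if_pos rfl]
    have hG0 : Gb 0 = 1 := by
      rw [Gb, tsum_eq_single 0 (fun k hk => by simp [zero_pow hk])]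
      simp [cc, ascPochhammer_zero]
    show (1:ℝ) / Real.sqrt 2 = 1 / Real.sqrt 2 * Gb 0
    rw [hG0, mul_one]
  · rw [if_neg h0]
    rw [lhs_eq_Fb hx1 hx2 h0]
    show Fb x = 1 / Real.sqrt 2 * Gb x
    exact eqOn_Fb_Gb ⟨hx1, hx2⟩
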